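/- Let X be a countable set and let P, H_1, …, H_n (with n ≥ 2) be probability distributions on X. Suppose the max semi-distances W(H_1), …, W(H_n) are all positive and sorted so that W(H_1) ≤ W(H_2) ≤ ⋯ ≤ W(H_n). Let (q_1,…,q_n) be the probability vector produced by the rounding procedure applied to W(H_1),…,W(H_n). Then Σ_{i=1}^n q_i · d_TV(P, H_i) ≤ (3 − 2/n) · min_{j∈[n]} d_TV(P, H_j). (Exact-semi-distance core of Theorem 1.2: a randomized output over the hypotheses achieving expected approximation factor 3 − 2/n.) -/

import Mathlib

set_option maxHeartbeats 1000000

private lemma two_mul_abs_tsum_subtype_le {X : Type*} {f : X → ℝ} (hf : Summable f)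
    (h0 : ∑' x, f x = 0) (s : Set X) :
    2 * |∑' x : s, f x| ≤ ∑' x, |f x| := by
  have habs : Summable fun x => |f x| := hf.abs
  have h1 : |∑' x : s, f x| ≤ ∑' x : s, |f x| := by
    simpa [Real.norm_eq_abs] using
      norm_tsum_le_tsum_norm (f := fun x : s => f x)
        (by simp only [Real.norm_eq_abs]; exact habs.subtype s)
  have h2 : |∑' x : ↑sᶜ, f x| ≤ ∑' x : ↑sᶜ, |f x| := by
    simpa [Real.norm_eq_abs] using
      norm_tsum_le_tsum_norm (f := fun x : ↑sᶜ => f x)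
        (by simp only [Real.norm_eq_abs]; exact habs.subtype sᶜ)
  have e1 := Summable.tsum_subtype_add_tsum_subtype_compl hf s
  have e2 := Summable.tsum_subtype_add_tsum_subtype_compl habs s
  rw [h0] at e1
  have e3 : ∑' x : ↑sᶜ, f x = -(∑' x : s, f x) := by linarith
  rw [e3, abs_neg] at h2
  linarith

private lemma two_mul_tsum_subtype_eq {X : Type*} {f : X → ℝ} (hf : Summable f)
    (h0 : ∑' x, f x = 0) {s : Set X} (hpos : ∀ x ∈ s, 0 ≤ f x) (hneg : ∀ x, x ∉ s → f x ≤ 0) :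
    2 * (∑' x : s, f x) = ∑' x, |f x| := by
  have habs : Summable fun x => |f x| := hf.abs
  have e1 := Summable.tsum_subtype_add_tsum_subtype_compl hf s
  have e2 := Summable.tsum_subtype_add_tsum_subtype_compl habs s
  rw [h0] at e1
  have g1 : ∑' x : s, |f x| = ∑' x : s, f x := tsum_congr fun x => abs_of_nonneg (hpos x x.2)
  have g2 : ∑' x : ↑sᶜ, |f x| = -∑' x : ↑sᶜ, f x := by
    rw [← tsum_neg]; exact tsum_congr fun x => abs_of_nonpos (hneg x x.2)
  linarith


/-- An index `k` (number of hypotheses considered, indices `0, …, k−1`) is *good*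
for the weights `W` if `(k−3)·W j ≤ Σ_{i < k, i ≠ j} W i` for every `j < k`. -/
def IsGoodIndex (W : ℕ → ℝ) (k : ℕ) : Prop :=
  ∀ j ∈ Finset.range k, ((k : ℝ) - 3) * W j ≤ ∑ i ∈ (Finset.range k).erase j, W i

/-- **Exact-semi-distance core of Theorem 1.2.**
Let `P, H 0, …, H (n−1)` (with `n ≥ 2`) be probability distributions on a countable
set `X`.  With Scheffé sets `S i j` (`{x | H i x < H j x}` for `i < j` and
`{x | H i x ≤ H j x}` for `i > j`), semi-distances
`w i j = |H j (S i j) − P (S i j)|` (and `w i i = 0`), and max semi-distances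
`Wm j = max_{i<n} w i j` assumed positive and sorted nondecreasingly, let `q` be the
probability vector produced by the rounding procedure applied to `Wm`.  Then
`Σ_i q i · d_TV(P, H i) ≤ (3 − 2/n) · min_j d_TV(P, H j)`. -/
theorem expected_value_three_minus_two_over_n {X : Type*} [Countable X]
    (n : ℕ) (hn : 2 ≤ n)
    (P : X → ℝ) (H : ℕ → X → ℝ)
    (hP0 : ∀ x, 0 ≤ P x) (hPs : Summable P) (hP1 : ∑' x, P x = 1)
    (hH0 : ∀ i, i < n → ∀ x, 0 ≤ H i x)
    (hHs : ∀ i, i < n → Summable (H i))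
    (hH1 : ∀ i, i < n → ∑' x, H i x = 1)
    (S : ℕ → ℕ → Set X)
    (hS : ∀ i j, S i j = if i < j then {x | H i x < H j x} else {x | H i x ≤ H j x})
    (w : ℕ → ℕ → ℝ)
    (hw : ∀ i j, i ≠ j → w i j = |(∑' x : S i j, H j x) - (∑' x : S i j, P x)|)
    (hwdiag : ∀ i, w i i = 0)
    (Wm : ℕ → ℝ)
    (hWmub : ∀ j, j < n → ∀ i, i < n → w i j ≤ Wm j)
    (hWmmem : ∀ j, j < n → ∃ i, i < n ∧ Wm j = w i j)
    (hWpos : ∀ j, j < n → 0 < Wm j)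
    (hsorted : ∀ i j, i ≤ j → j < n → Wm i ≤ Wm j)
    (k : ℕ) (hk1 : 1 ≤ k) (hkn : k ≤ n)
    (hgood : IsGoodIndex Wm k)
    (hmax : ∀ k', k' ≤ n → IsGoodIndex Wm k' → k' ≤ k)
    (q : ℕ → ℝ)
    (hq : ∀ i, q i = if i < k then
        ((∑ j ∈ Finset.range k, Wm j) / Wm i - ((k : ℝ) - 2)) /
          ((∑ j ∈ Finset.range k, Wm j) * (∑ j ∈ Finset.range k, (Wm j)⁻¹)
            - (k : ℝ) * ((k : ℝ) - 2))
      else 0) :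
    ∑ i ∈ Finset.range n, q i * ((1 / 2) * ∑' x, |P x - H i x|)
      ≤ (3 - 2 / (n : ℝ)) *
        (Finset.range n).inf' (Finset.nonempty_range_iff.mpr (by omega))
          (fun j => (1 / 2) * ∑' x, |P x - H j x|) := by
  classical
  set D : ℕ → ℝ := fun j => (1 / 2) * ∑' x, |P x - H j x| with hDdef
  -- basic summability
  have hsubPH : ∀ i, i < n → Summable (fun x => P x - H i x) := fun i hi => hPs.sub (hHs i hi)
  have habsPH : ∀ i, i < n → Summable (fun x => |P x - H i x|) := fun i hi => (hsubPH i hi).abs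
  -- complement of Scheffé sets
  have hScompl : ∀ i j, i ≠ j → S j i = (S i j)ᶜ := by
    intro i j hij
    rcases lt_or_gt_of_ne hij with h | h
    · rw [hS i j, hS j i, if_pos h, if_neg (by omega : ¬ j < i)]
      ext x; simp [not_lt]
    · rw [hS i j, hS j i, if_neg (by omega : ¬ i < j), if_pos (by omega : j < i)]
      ext x; simp [not_le]
  -- (A)  w i j ≤ D j
  have hA : ∀ i j, i < n → j < n → i ≠ j → w i j ≤ D j := by
    intro i j hi hj hij
    have hf : Summable (fun x => H j x - P x) := (hHs j hj).sub hPs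
    have hf0 : ∑' x, (H j x - P x) = 0 := by
      rw [Summable.tsum_sub (hHs j hj) hPs, hH1 j hj, hP1]; ring
    have h1 := two_mul_abs_tsum_subtype_le hf hf0 (S i j)
    have h2 : ∑' x, |H j x - P x| = ∑' x, |P x - H j x| :=
      tsum_congr fun x => abs_sub_comm _ _
    have sj : Summable (fun x : S i j => H j ↑x) := (hHs j hj).subtype _
    have sp : Summable (fun x : S i j => P ↑x) := hPs.subtype _
    have h3 : ∑' x : S i j, (H j x - P x)
        = (∑' x : S i j, H j x) - ∑' x : S i j, P x := Summable.tsum_sub sj sp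
    rw [hw i j hij, hDdef]
    rw [h3, h2] at h1
    linarith
  -- (B)  D j ≤ D i + w i j + w j i
  have hB : ∀ i j, i < n → j < n → i ≠ j → D j ≤ D i + w i j + w j i := by
    intro i j hi hj hij
    have hf : Summable (fun x => H j x - H i x) := (hHs j hj).sub (hHs i hi)
    have hf0 : ∑' x, (H j x - H i x) = 0 := by
      rw [Summable.tsum_sub (hHs j hj) (hHs i hi), hH1 j hj, hH1 i hi]; ring
    have hpos : ∀ x ∈ S i j, 0 ≤ H j x - H i x := by
      intro x hx
      rw [hS i j] at hx
      by_cases h : i < j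
      · rw [if_pos h] at hx; exact le_of_lt (sub_pos.mpr hx)
      · rw [if_neg h] at hx; exact sub_nonneg.mpr hx
    have hneg : ∀ x, x ∉ S i j → H j x - H i x ≤ 0 := by
      intro x hx
      rw [hS i j] at hx
      by_cases h : i < j
      · rw [if_pos h] at hx; simp only [Set.mem_setOf_eq, not_lt] at hx
        exact sub_nonpos.mpr hx
      · rw [if_neg h] at hx; simp only [Set.mem_setOf_eq, not_le] at hx
        exact le_of_lt (sub_neg.mpr hx)
    have hSch := two_mul_tsum_subtype_eq hf hf0 hpos hneg
    -- triangle inequality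
    have htri : D j ≤ D i + (1 / 2) * ∑' x, |H j x - H i x| := by
      have hle : ∀ x, |P x - H j x| ≤ |P x - H i x| + |H j x - H i x| := by
        intro x
        calc |P x - H j x| ≤ |P x - H i x| + |H i x - H j x| := abs_sub_le _ _ _
          _ = |P x - H i x| + |H j x - H i x| := by rw [abs_sub_comm (H i x)]
      have hsum : Summable (fun x => |P x - H i x| + |H j x - H i x|) :=
        (habsPH i hi).add hf.abs
      have := Summable.tsum_le_tsum hle (habsPH j hj) hsum
      rw [Summable.tsum_add (habsPH i hi) hf.abs] at this
      rw [hDdef]; dsimp only; linarith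
    -- split the Scheffé mass
    have h3 : ∑' x : S i j, (H j x - H i x)
        = ((∑' x : S i j, H j x) - ∑' x : S i j, P x)
          + ((∑' x : S i j, P x) - ∑' x : S i j, H i x) := by
      have sj : Summable (fun x : S i j => H j ↑x) := (hHs j hj).subtype _
      have si : Summable (fun x : S i j => H i ↑x) := (hHs i hi).subtype _
      rw [Summable.tsum_sub sj si]; ring
    have h4 : (∑' x : S i j, H j x) - ∑' x : S i j, P x ≤ w i j := by
      rw [hw i j hij]; exact le_abs_self _
    have h5 : (∑' x : S i j, P x) - ∑' x : S i j, H i x ≤ w j i := by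
      rw [hw j i (Ne.symm hij), hScompl i j hij]
      have e1 := Summable.tsum_subtype_add_tsum_subtype_compl (hHs i hi) (S i j)
      have e2 := Summable.tsum_subtype_add_tsum_subtype_compl hPs (S i j)
      rw [hH1 i hi] at e1
      rw [hP1] at e2
      have : (∑' x : ↑(S i j)ᶜ, H i x) - ∑' x : ↑(S i j)ᶜ, P x
          = (∑' x : S i j, P x) - ∑' x : S i j, H i x := by linarith
      rw [this]
      exact le_abs_self _
    linarith
  -- Wm j ≤ D j
  have hWleD : ∀ j, j < n → Wm j ≤ D j := by
    intro j hj
    obtain ⟨i, hi, hwi⟩ := hWmmem j hj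
    have hij : i ≠ j := by
      intro h; rw [h, hwdiag] at hwi; exact absurd hwi (ne_of_gt (hWpos j hj))
    rw [hwi]; exact hA i j hi hj hij
  have hDnn : ∀ j, j < n → 0 ≤ D j := fun j hj => le_trans (hWpos j hj).le (hWleD j hj)
  -- argmin
  have hne : (Finset.range n).Nonempty := Finset.nonempty_range_iff.mpr (by omega)
  obtain ⟨j₀, hj₀mem, hj₀min⟩ := Finset.exists_min_image (Finset.range n) D hne
  have hj₀n : j₀ < n := Finset.mem_range.mp hj₀mem
  set a : ℝ := Wm j₀ with hadef
  set b : ℝ := D j₀ with hbdef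
  have hapos : 0 < a := hWpos j₀ hj₀n
  have hab : a ≤ b := hWleD j₀ hj₀n
  have hbpos : 0 < b := lt_of_lt_of_le hapos hab
  have hDub : ∀ i, i < n → i ≠ j₀ → D i ≤ b + Wm i + a := by
    intro i hi hij
    have h := hB j₀ i hj₀n hi (Ne.symm hij)
    have h1 : w j₀ i ≤ Wm i := hWmub i hi j₀ hj₀n
    have h2 : w i j₀ ≤ Wm j₀ := hWmub j₀ hj₀n i hi
    rw [hbdef]; linarith
  -- algebra of q
  set D' : ℝ := ∑ j ∈ Finset.range k, Wm j with hD'def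
  set C' : ℝ := ∑ j ∈ Finset.range k, (Wm j)⁻¹ with hC'def
  set den : ℝ := D' * C' - (k : ℝ) * ((k : ℝ) - 2) with hdendef
  have hWposk : ∀ i ∈ Finset.range k, 0 < Wm i := fun i hi =>
    hWpos i (lt_of_lt_of_le (Finset.mem_range.mp hi) hkn)
  have hk2 : 2 ≤ k := by
    refine hmax 2 hn ?_
    intro j hj
    have hj2 : j < 2 := Finset.mem_range.mp hj
    have h1 : 0 < Wm j := hWpos j (by omega)
    have h2 : 0 ≤ ∑ i ∈ (Finset.range 2).erase j, Wm i :=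
      Finset.sum_nonneg fun i hi => by
        have : i < 2 := Finset.mem_range.mp (Finset.mem_of_mem_erase hi)
        exact (hWpos i (by omega)).le
    push_cast
    nlinarith
  have hD'pos : 0 < D' := Finset.sum_pos hWposk ⟨0, Finset.mem_range.mpr (by omega)⟩
  have hCS : (k : ℝ) ^ 2 ≤ D' * C' := by
    have h := Finset.sum_mul_sq_le_sq_mul_sq (Finset.range k)
      (fun i => Real.sqrt (Wm i)) (fun i => (Real.sqrt (Wm i))⁻¹)
    have e1 : ∑ i ∈ Finset.range k, Real.sqrt (Wm i) * (Real.sqrt (Wm i))⁻¹ = (k : ℝ) := by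
      rw [Finset.sum_congr rfl fun i hi =>
        mul_inv_cancel₀ (Real.sqrt_ne_zero'.mpr (hWposk i hi))]
      simp
    have e2 : ∑ i ∈ Finset.range k, Real.sqrt (Wm i) ^ 2 = D' := by
      rw [hD'def]
      exact Finset.sum_congr rfl fun i hi => Real.sq_sqrt (hWposk i hi).le
    have e3 : ∑ i ∈ Finset.range k, ((Real.sqrt (Wm i))⁻¹) ^ 2 = C' := by
      rw [hC'def]
      refine Finset.sum_congr rfl fun i hi => ?_
      rw [← Real.sqrt_inv, Real.sq_sqrt (inv_nonneg.mpr (hWposk i hi).le)]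
    rw [e1, e2, e3] at h
    exact h
  have hden2k : 2 * (k : ℝ) ≤ den := by rw [hdendef]; nlinarith
  have hdenpos : 0 < den := by
    have : (0 : ℝ) < 2 * (k : ℝ) := by positivity
    linarith
  have hqval : ∀ i, i < k → q i = (D' / Wm i - ((k : ℝ) - 2)) / den := by
    intro i hi; rw [hq i, if_pos hi]
  have hq0 : ∀ i, k ≤ i → q i = 0 := by
    intro i hi; rw [hq i, if_neg (by omega)]
  have hnum : ∀ i ∈ Finset.range k, ((k : ℝ) - 2) * Wm i ≤ D' := by
    intro i hi
    have h1 := hgood i hi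
    have h2 : ∑ j ∈ (Finset.range k).erase i, Wm j + Wm i = D' :=
      Finset.sum_erase_add _ _ hi
    linarith
  have hqnn : ∀ i ∈ Finset.range k, 0 ≤ q i := by
    intro i hi
    rw [hqval i (Finset.mem_range.mp hi)]
    have h1 : ((k : ℝ) - 2) ≤ D' / Wm i :=
      (le_div_iff₀ (hWposk i hi)).mpr (hnum i hi)
    exact div_nonneg (by linarith) hdenpos.le
  have hqW : ∀ i ∈ Finset.range k, q i * Wm i = (D' - ((k : ℝ) - 2) * Wm i) / den := by
    intro i hi
    have h0 : Wm i ≠ 0 := (hWposk i hi).ne'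
    rw [hqval i (Finset.mem_range.mp hi)]
    field_simp
  have hqsum : ∑ i ∈ Finset.range k, q i = 1 := by
    rw [Finset.sum_congr rfl fun i hi => hqval i (Finset.mem_range.mp hi)]
    rw [← Finset.sum_div]
    rw [Finset.sum_sub_distrib]
    have e1 : ∑ i ∈ Finset.range k, D' / Wm i = D' * C' := by
      rw [hC'def, Finset.mul_sum]
      exact Finset.sum_congr rfl fun i _ => div_eq_mul_inv _ _
    rw [e1, Finset.sum_const, Finset.card_range, nsmul_eq_mul]
    rw [div_eq_one_iff_eq hdenpos.ne']
  have hqWsum : ∑ i ∈ Finset.range k, q i * Wm i = 2 * D' / den := by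
    rw [Finset.sum_congr rfl hqW, ← Finset.sum_div, Finset.sum_sub_distrib]
    rw [Finset.sum_const, Finset.card_range, nsmul_eq_mul, ← Finset.mul_sum, ← hD'def]
    congr 1
    ring
  -- reduce sum to range k
  have hsumred : ∑ i ∈ Finset.range n, q i * D i = ∑ i ∈ Finset.range k, q i * D i := by
    refine (Finset.sum_subset (Finset.range_subset_range.mpr hkn) ?_).symm
    intro i _ hik
    rw [hq0 i (by simpa using hik)]
    ring
  -- the key polynomial inequality
  have hnR : (2 : ℝ) ≤ (n : ℝ) := by exact_mod_cast hn
  have hkR : (2 : ℝ) ≤ (k : ℝ) := by exact_mod_cast hk2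
  have hknR : (k : ℝ) ≤ (n : ℝ) := by exact_mod_cast hkn
  have hnpos : (0 : ℝ) < (n : ℝ) := by linarith
  have key : (n : ℝ) * (a * den) + 2 * (n : ℝ) * ((k : ℝ) - 2) * a
      ≤ (2 * (n : ℝ) - 2) * (b * den) := by
    nlinarith [mul_nonneg (mul_nonneg (sub_nonneg.mpr hab) hdenpos.le)
        (by linarith : (0 : ℝ) ≤ 2 * (n : ℝ) - 2),
      mul_nonneg hapos.le (sub_nonneg.mpr hden2k),
      mul_nonneg (mul_nonneg hapos.le (sub_nonneg.mpr hknR)) (by norm_num : (0:ℝ) ≤ 4),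
      mul_nonneg (mul_nonneg hapos.le (sub_nonneg.mpr hden2k)) (by linarith : (0:ℝ) ≤ (n:ℝ) - 2)]
  -- final bound against the infimum
  have hfinal : ∀ E : ℝ, (∑ i ∈ Finset.range n, q i * D i ≤ E) → E ≤ (3 - 2 / (n : ℝ)) * b →
      ∑ i ∈ Finset.range n, q i * ((1 / 2) * ∑' x, |P x - H i x|)
        ≤ (3 - 2 / (n : ℝ)) *
          (Finset.range n).inf' (Finset.nonempty_range_iff.mpr (by omega))
            (fun j => (1 / 2) * ∑' x, |P x - H j x|) := by
    intro E h1 h2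
    have h3 : (3 : ℝ) - 2 / (n : ℝ) ≥ 0 := by
      have : 2 / (n : ℝ) ≤ 1 := by
        rw [div_le_one hnpos]; linarith
      linarith
    have h4 : b ≤ (Finset.range n).inf' (Finset.nonempty_range_iff.mpr (by omega))
        (fun j => (1 / 2) * ∑' x, |P x - H j x|) :=
      Finset.le_inf' _ _ fun j hj => hj₀min j hj
    calc ∑ i ∈ Finset.range n, q i * ((1 / 2) * ∑' x, |P x - H i x|)
        = ∑ i ∈ Finset.range n, q i * D i := rfl
      _ ≤ E := h1
      _ ≤ (3 - 2 / (n : ℝ)) * b := h2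
      _ ≤ _ := mul_le_mul_of_nonneg_left h4 h3
  by_cases hcase : j₀ < k
  · -- Case 1 : j₀ < k
    have hj₀k : j₀ ∈ Finset.range k := Finset.mem_range.mpr hcase
    have hsplit : ∑ i ∈ (Finset.range k).erase j₀, q i * D i + q j₀ * D j₀
        = ∑ i ∈ Finset.range k, q i * D i := Finset.sum_erase_add _ _ hj₀k
    have hqsplit : ∑ i ∈ (Finset.range k).erase j₀, q i + q j₀ = 1 := by
      rw [Finset.sum_erase_add _ _ hj₀k]; exact hqsum
    have hqWsplit : ∑ i ∈ (Finset.range k).erase j₀, q i * Wm i + q j₀ * a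
        = 2 * D' / den := by
      rw [hadef, Finset.sum_erase_add _ _ hj₀k]; exact hqWsum
    have hbound : ∑ i ∈ (Finset.range k).erase j₀, q i * D i
        ≤ ∑ i ∈ (Finset.range k).erase j₀, q i * (b + Wm i + a) := by
      refine Finset.sum_le_sum fun i hi => ?_
      have hik : i < k := Finset.mem_range.mp (Finset.mem_of_mem_erase hi)
      have hin : i < n := lt_of_lt_of_le hik hkn
      have hij : i ≠ j₀ := Finset.ne_of_mem_erase hi
      exact mul_le_mul_of_nonneg_left (hDub i hin hij) (hqnn i (Finset.mem_of_mem_erase hi))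
    have hexp : ∑ i ∈ (Finset.range k).erase j₀, q i * (b + Wm i + a)
        = (b + a) * (∑ i ∈ (Finset.range k).erase j₀, q i)
          + ∑ i ∈ (Finset.range k).erase j₀, q i * Wm i := by
      rw [Finset.mul_sum, ← Finset.sum_add_distrib]
      exact Finset.sum_congr rfl fun i _ => by ring
    have hqj₀a : q j₀ * a = (D' - ((k : ℝ) - 2) * a) / den := by
      rw [hadef]; exact hqW j₀ hj₀k
    refine hfinal (b + a - 2 * ((D' - ((k : ℝ) - 2) * a) / den) + 2 * D' / den) ?_ ?_
    · rw [hsumred, ← hsplit]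
      have e1 : ∑ i ∈ (Finset.range k).erase j₀, q i = 1 - q j₀ := by linarith
      have e2 : ∑ i ∈ (Finset.range k).erase j₀, q i * Wm i = 2 * D' / den - q j₀ * a := by
        linarith
      have e3 : q j₀ * D j₀ = q j₀ * b := rfl
      rw [e3]
      have h7 : ∑ i ∈ (Finset.range k).erase j₀, q i * D i
          ≤ (b + a) * (1 - q j₀) + (2 * D' / den - q j₀ * a) := by
        rw [← e1, ← e2]
        calc _ ≤ _ := hbound
          _ = _ := hexp
      have hringid : (b + a) * (1 - q j₀) = b + a - q j₀ * b - q j₀ * a := by ring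
      linarith [h7, hqj₀a, hringid]
    · -- algebraic bound
      rw [← sub_nonneg]
      have hexp2 : (3 - 2 / (n : ℝ)) * b - (b + a - 2 * ((D' - ((k : ℝ) - 2) * a) / den)
            + 2 * D' / den)
          = ((2 * (n : ℝ) - 2) * (b * den) - (n : ℝ) * (a * den)
              - 2 * (n : ℝ) * ((k : ℝ) - 2) * a) / ((n : ℝ) * den) := by
        field_simp
        ring
      rw [hexp2]
      apply div_nonneg _ (by positivity)
      linarith [key]
  · -- Case 2 : k ≤ j₀
    have hcase' : k ≤ j₀ := le_of_not_gt hcase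
    have hkltn : k < n := lt_of_le_of_lt hcase' hj₀n
    have hk3 : 3 ≤ k := by
      refine hmax 3 (by omega) ?_
      intro j hj
      have : ((3 : ℕ) : ℝ) - 3 = 0 := by norm_num
      rw [this, zero_mul]
      refine Finset.sum_nonneg fun i hi => ?_
      have : i < 3 := Finset.mem_range.mp (Finset.mem_of_mem_erase hi)
      exact (hWpos i (by omega)).le
    have hnotgood : ¬ IsGoodIndex Wm (k + 1) := by
      intro h
      have := hmax (k + 1) (by omega) h
      omega
    rw [IsGoodIndex] at hnotgood
    push_neg at hnotgood
    obtain ⟨j, hjmem, hjlt⟩ := hnotgood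
    have hjk1 : j < k + 1 := Finset.mem_range.mp hjmem
    have hjeq : j = k := by
      by_contra hne'
      have hjk : j < k := by omega
      have h1 := hgood j (Finset.mem_range.mpr hjk)
      have h2 : ∑ i ∈ (Finset.range (k + 1)).erase j, Wm i
          = ∑ i ∈ (Finset.range k).erase j, Wm i + Wm k := by
        have e1 : ∑ i ∈ (Finset.range (k + 1)).erase j, Wm i + Wm j
            = ∑ i ∈ Finset.range (k + 1), Wm i := Finset.sum_erase_add _ _ hjmem
        have e2 : ∑ i ∈ Finset.range (k + 1), Wm i
            = ∑ i ∈ Finset.range k, Wm i + Wm k := Finset.sum_range_succ _ _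
        have e3 : ∑ i ∈ (Finset.range k).erase j, Wm i + Wm j
            = ∑ i ∈ Finset.range k, Wm i :=
          Finset.sum_erase_add _ _ (Finset.mem_range.mpr hjk)
        linarith
      have h3 : Wm j ≤ Wm k := hsorted j k (by omega) hkltn
      have hcast : ((k + 1 : ℕ) : ℝ) - 3 = ((k : ℝ) - 3) + 1 := by push_cast; ring
      rw [hcast, h2] at hjlt
      nlinarith
    rw [hjeq] at hjlt
    have herase : (Finset.range (k + 1)).erase k = Finset.range k := by
      rw [Finset.range_add_one, Finset.erase_insert (by simp)]
    rw [herase] at hjlt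
    have hcast : ((k + 1 : ℕ) : ℝ) - 3 = (k : ℝ) - 2 := by push_cast; ring
    rw [hcast] at hjlt
    -- hjlt : D' < ((k:ℝ)-2) * Wm k  (note direction: sum < (k-2)*Wm k)
    have hD'lt : D' < ((k : ℝ) - 2) * Wm k := hjlt
    have hWka : Wm k ≤ a := hsorted k j₀ hcase' hj₀n
    have hD'a : D' ≤ ((k : ℝ) - 2) * a := by nlinarith [hWpos k hkltn]
    have hbound : ∑ i ∈ Finset.range k, q i * D i
        ≤ ∑ i ∈ Finset.range k, q i * (b + Wm i + a) := by
      refine Finset.sum_le_sum fun i hi => ?_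
      have hik : i < k := Finset.mem_range.mp hi
      have hin : i < n := lt_of_lt_of_le hik hkn
      have hij : i ≠ j₀ := by omega
      exact mul_le_mul_of_nonneg_left (hDub i hin hij) (hqnn i hi)
    have hexp : ∑ i ∈ Finset.range k, q i * (b + Wm i + a)
        = (b + a) * (∑ i ∈ Finset.range k, q i) + ∑ i ∈ Finset.range k, q i * Wm i := by
      rw [Finset.mul_sum, ← Finset.sum_add_distrib]
      exact Finset.sum_congr rfl fun i _ => by ring
    refine hfinal (b + a + 2 * D' / den) ?_ ?_
    · rw [hsumred]
      calc ∑ i ∈ Finset.range k, q i * D i ≤ _ := hbound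
        _ = (b + a) * 1 + 2 * D' / den := by rw [hexp, hqsum, hqWsum]
        _ = b + a + 2 * D' / den := by ring
    · rw [← sub_nonneg]
      have hexp2 : (3 - 2 / (n : ℝ)) * b - (b + a + 2 * D' / den)
          = ((2 * (n : ℝ) - 2) * (b * den) - (n : ℝ) * (a * den)
              - 2 * (n : ℝ) * D') / ((n : ℝ) * den) := by
        field_simp
        ring
      rw [hexp2]
      apply div_nonneg _ (by positivity)
      nlinarith [key, hD'a, hnpos]
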